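/- Let G₁ be the group with presentation on seven generators α₁, α₂, δ₁, δ₂, δ₃, β₄, β₅ subject to the seven relations β₅²β₄ = 1, β₄⁻¹δ₃β₅ = 1, β₄δ₃⁻¹β₅⁻¹ = 1, δ₁α₁⁻¹δ₂α₂⁻¹ = 1, α₁δ₂⁻¹α₂δ₁⁻¹ = 1, α₂δ₃⁻¹α₁ = 1, β₄δ₂⁻¹β₅⁻¹δ₁⁻¹ = 1. Let G₂ be the group with presentation ⟨s, t, w | s²w⁻¹sts⁻²ws⁻¹t⁻¹ = 1, tw⁻¹t⁻¹w = 1⟩. Then G₁ and G₂ are isomorphic. -/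

import Mathlib

open FreeGroup

def rels3pp : Set (FreeGroup (Fin 7)) :=
  { of 6 ^ 2 * of 5,
    (of 5)⁻¹ * of 4 * of 6,
    of 5 * (of 4)⁻¹ * (of 6)⁻¹,
    of 2 * (of 0)⁻¹ * of 3 * (of 1)⁻¹,
    of 0 * (of 3)⁻¹ * of 1 * (of 2)⁻¹,
    of 1 * (of 4)⁻¹ * of 0,
    of 5 * (of 3)⁻¹ * (of 6)⁻¹ * (of 2)⁻¹ }

def relsMagic : Set (FreeGroup (Fin 3)) :=
  { of 0 ^ 2 * (of 2)⁻¹ * of 0 * of 1 * (of 0 ^ 2)⁻¹ * of 2 * (of 0)⁻¹ * (of 1)⁻¹,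
    of 1 * (of 2)⁻¹ * (of 1)⁻¹ * of 2 }

namespace MagicIso

lemma rel_one {α : Type*} {rels : Set (FreeGroup α)} {r : FreeGroup α} (h : r ∈ rels) :
    PresentedGroup.mk rels r = 1 :=
  (QuotientGroup.eq_one_iff r).mpr (Subgroup.subset_normalClosure h)

local notation "A" i => (PresentedGroup.of i : PresentedGroup rels3pp)
local notation "S" i => (PresentedGroup.of i : PresentedGroup relsMagic)

lemma h1 : ((A 6) ^ 2) * (A 5) = 1 := by
  exact rel_one (rels := rels3pp) (r := of 6 ^ 2 * of 5)
    (by simp [rels3pp])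

lemma h2 : (A 5)⁻¹ * (A 4) * (A 6) = 1 := by
  exact rel_one (rels := rels3pp) (r := (of 5)⁻¹ * of 4 * of 6)
    (by simp [rels3pp])

lemma h4 : (A 2) * (A 0)⁻¹ * (A 3) * (A 1)⁻¹ = 1 := by
  exact rel_one (rels := rels3pp)
    (r := of 2 * (of 0)⁻¹ * of 3 * (of 1)⁻¹) (by simp [rels3pp])

lemma h5 : (A 0) * (A 3)⁻¹ * (A 1) * (A 2)⁻¹ = 1 := by
  exact rel_one (rels := rels3pp)
    (r := of 0 * (of 3)⁻¹ * of 1 * (of 2)⁻¹) (by simp [rels3pp])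

lemma h6 : (A 1) * (A 4)⁻¹ * (A 0) = 1 := by
  exact rel_one (rels := rels3pp)
    (r := of 1 * (of 4)⁻¹ * of 0) (by simp [rels3pp])

lemma h7 : (A 5) * (A 3)⁻¹ * (A 6)⁻¹ * (A 2)⁻¹ = 1 := by
  exact rel_one (rels := rels3pp)
    (r := of 5 * (of 3)⁻¹ * (of 6)⁻¹ * (of 2)⁻¹) (by simp [rels3pp])

lemma q1 : ((S 0) ^ 2) * (S 2)⁻¹ * (S 0) * (S 1) * ((S 0) ^ 2)⁻¹ * (S 2) * (S 0)⁻¹ * (S 1)⁻¹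
    = 1 := by
  exact rel_one (rels := relsMagic)
    (r := of 0 ^ 2 * (of 2)⁻¹ * of 0 * of 1 * (of 0 ^ 2)⁻¹ * of 2 * (of 0)⁻¹ * (of 1)⁻¹)
    (by simp [relsMagic])

lemma q2 : (S 1) * (S 2)⁻¹ * (S 1)⁻¹ * (S 2) = 1 := by
  exact rel_one (rels := relsMagic)
    (r := of 1 * (of 2)⁻¹ * (of 1)⁻¹ * of 2) (by simp [relsMagic])

/-- solved forms of the defining relations of `rels3pp` -/
lemma e5 : (A 5) = ((A 6) ^ 2)⁻¹ := eq_inv_of_mul_eq_one_right h1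

lemma e4 : (A 4) = (A 5) * (A 6)⁻¹ :=
  inv_mul_eq_iff_eq_mul.mp (eq_inv_of_mul_eq_one_left h2)

lemma e1 : (A 1) = (A 0)⁻¹ * (A 4) :=
  mul_inv_eq_iff_eq_mul.mp (eq_inv_of_mul_eq_one_left h6)

lemma e2 : (A 2) = (A 5) * (A 3)⁻¹ * (A 6)⁻¹ := (mul_inv_eq_one.mp h7).symm

lemma key5 : (A 0) * (A 3)⁻¹ * (A 0)⁻¹ = ((A 6) ^ 2)⁻¹ * (A 3)⁻¹ * ((A 6) ^ 2) := by
  have h5' := h5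
  rw [e1, e2, e4, e5] at h5'
  conv_rhs => rw [← one_mul ((((A 6) ^ 2)⁻¹ * (A 3)⁻¹ * ((A 6) ^ 2)))]
  rw [← h5']
  group

lemma key4 : (A 0)⁻¹ * (A 3) * ((A 6) ^ 3) * (A 0) = (A 6) * (A 3) * ((A 6) ^ 2) := by
  have h4' := h4
  rw [e1, e2, e4, e5] at h4'
  conv_rhs => rw [← mul_one (((A 6) * (A 3) * ((A 6) ^ 2)))]
  rw [← h4']
  group

/-- the map `G₁ → G₂` on generators -/
def fphi : Fin 7 → PresentedGroup relsMagic
  | 0 => ((S 0) ^ 2)⁻¹ * (S 1)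
  | 1 => (S 1)⁻¹ * (S 0)⁻¹
  | 2 => ((S 0) ^ 2)⁻¹ * (S 2) * (S 0)⁻¹
  | 3 => (S 2)⁻¹
  | 4 => ((S 0) ^ 3)⁻¹
  | 5 => ((S 0) ^ 2)⁻¹
  | 6 => (S 0)

/-- the map `G₂ → G₁` on generators -/
def fpsi : Fin 3 → PresentedGroup rels3pp
  | 0 => (A 6)
  | 1 => ((A 6) ^ 2) * (A 0)
  | 2 => (A 3)⁻¹

lemma hphi : ∀ r ∈ rels3pp, FreeGroup.lift fphi r = 1 := by
  intro r hr
  simp only [rels3pp, Set.mem_insert_iff, Set.mem_singleton_iff] at hr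
  rcases hr with rfl | rfl | rfl | rfl | rfl | rfl | rfl <;>
    simp only [_root_.map_mul, _root_.map_inv, _root_.map_pow, FreeGroup.lift_apply_of, fphi]
  · group
  · group
  · group
  · -- image of R4, uses q1
    calc (((S 0) ^ 2)⁻¹ * (S 2) * (S 0)⁻¹) * (((S 0) ^ 2)⁻¹ * (S 1))⁻¹ * ((S 2))⁻¹ *
          ((S 1)⁻¹ * (S 0)⁻¹)⁻¹
        = (((S 0) ^ 2)⁻¹ * (S 2) * (S 0)⁻¹ * (S 1)⁻¹) *
            (((S 0) ^ 2) * (S 2)⁻¹ * (S 0) * (S 1) * ((S 0) ^ 2)⁻¹ * (S 2) * (S 0)⁻¹ * (S 1)⁻¹) *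
            (((S 0) ^ 2)⁻¹ * (S 2) * (S 0)⁻¹ * (S 1)⁻¹)⁻¹ := by group
      _ = 1 := by rw [q1]; group
  · -- image of R5, uses q2
    calc (((S 0) ^ 2)⁻¹ * (S 1)) * ((S 2)⁻¹)⁻¹ * ((S 1)⁻¹ * (S 0)⁻¹) *
          (((S 0) ^ 2)⁻¹ * (S 2) * (S 0)⁻¹)⁻¹
        = (((S 0) ^ 2)⁻¹ * (S 2)) * ((S 1) * (S 2)⁻¹ * (S 1)⁻¹ * (S 2))⁻¹ *
            (((S 0) ^ 2)⁻¹ * (S 2))⁻¹ := by group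
      _ = 1 := by rw [q2]; group
  · group
  · group

lemma hpsi : ∀ r ∈ relsMagic, FreeGroup.lift fpsi r = 1 := by
  intro r hr
  simp only [relsMagic, Set.mem_insert_iff, Set.mem_singleton_iff] at hr
  rcases hr with rfl | rfl <;>
    simp only [_root_.map_mul, _root_.map_inv, _root_.map_pow, FreeGroup.lift_apply_of, fpsi]
  · -- image of the first magic relation, uses key4
    calc ((A 6) ^ 2) * ((A 3)⁻¹)⁻¹ * (A 6) * (((A 6) ^ 2) * (A 0)) * (((A 6) ^ 2))⁻¹ *
          (A 3)⁻¹ * (A 6)⁻¹ * (((A 6) ^ 2) * (A 0))⁻¹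
        = ((A 6) ^ 2) * ((A 0) * ((A 0)⁻¹ * (A 3) * ((A 6) ^ 3) * (A 0))) * ((A 6) ^ 2)⁻¹ *
            (A 3)⁻¹ * (A 6)⁻¹ * (A 0)⁻¹ * ((A 6) ^ 2)⁻¹ := by group
      _ = 1 := by rw [key4]; group
  · -- image of the second magic relation, uses key5
    calc (((A 6) ^ 2) * (A 0)) * ((A 3)⁻¹)⁻¹ * (((A 6) ^ 2) * (A 0))⁻¹ * (A 3)⁻¹
        = ((A 6) ^ 2) * ((A 0) * (A 3)⁻¹ * (A 0)⁻¹)⁻¹ * ((A 6) ^ 2)⁻¹ * (A 3)⁻¹ := by group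
      _ = 1 := by rw [key5]; group

def phi : PresentedGroup rels3pp →* PresentedGroup relsMagic := PresentedGroup.toGroup hphi
def psi : PresentedGroup relsMagic →* PresentedGroup rels3pp := PresentedGroup.toGroup hpsi

lemma psi_comp_phi : psi.comp phi = MonoidHom.id _ := by
  ext x
  fin_cases x
  · show psi (phi (A 0)) = (A 0)
    simp only [phi, psi, PresentedGroup.toGroup.of, fphi, _root_.map_mul, _root_.map_inv,
      _root_.map_pow, fpsi]
    group
  · show psi (phi (A 1)) = (A 1)
    simp only [phi, psi, PresentedGroup.toGroup.of, fphi, _root_.map_mul, _root_.map_inv,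
      _root_.map_pow, fpsi]
    rw [e1, e4, e5]; group
  · show psi (phi (A 2)) = (A 2)
    simp only [phi, psi, PresentedGroup.toGroup.of, fphi, _root_.map_mul, _root_.map_inv,
      _root_.map_pow, fpsi]
    rw [e2, e5]
  · show psi (phi (A 3)) = (A 3)
    simp only [phi, psi, PresentedGroup.toGroup.of, fphi, _root_.map_mul, _root_.map_inv,
      _root_.map_pow, fpsi]
    group
  · show psi (phi (A 4)) = (A 4)
    simp only [phi, psi, PresentedGroup.toGroup.of, fphi, _root_.map_mul, _root_.map_inv,
      _root_.map_pow, fpsi]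
    rw [e4, e5]; group
  · show psi (phi (A 5)) = (A 5)
    simp only [phi, psi, PresentedGroup.toGroup.of, fphi, _root_.map_mul, _root_.map_inv,
      _root_.map_pow, fpsi]
    rw [e5]
  · show psi (phi (A 6)) = (A 6)
    simp only [phi, psi, PresentedGroup.toGroup.of, fphi, _root_.map_mul, _root_.map_inv,
      _root_.map_pow, fpsi]

lemma phi_comp_psi : phi.comp psi = MonoidHom.id _ := by
  ext x
  fin_cases x
  · show phi (psi (S 0)) = (S 0)
    simp only [phi, psi, PresentedGroup.toGroup.of, fpsi, _root_.map_mul, _root_.map_inv,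
      _root_.map_pow, fphi]
  · show phi (psi (S 1)) = (S 1)
    simp only [phi, psi, PresentedGroup.toGroup.of, fpsi, _root_.map_mul, _root_.map_inv,
      _root_.map_pow, fphi]
    group
  · show phi (psi (S 2)) = (S 2)
    simp only [phi, psi, PresentedGroup.toGroup.of, fpsi, _root_.map_mul, _root_.map_inv,
      _root_.map_pow, fphi]
    group

end MagicIso

theorem fundamental_group_is_magic_manifold_group :
    Nonempty (PresentedGroup rels3pp ≃* PresentedGroup relsMagic) :=
  ⟨MagicIso.phi.toMulEquiv MagicIso.psi MagicIso.psi_comp_phi MagicIso.phi_comp_psi⟩
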